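/- Let ξ ∈ Q±* be freely irreducible with decomposition ξ = ξ_I ξ_II into first and second parts (induced by the decomposition of its pattern). Then for the automaton B of the paper, for any i ∈ ℕ and w ∈ X*₍ᵢ₎, either D_{i,w}(ξ) = D_{i,w}(ξ_I) ξ_II or D_{i,w}(ξ) = D_{i,w}(ξ_I) ξ̃_II, where ξ̃ denotes the word obtained from ξ by swapping a↔b and a⁻¹↔b⁻¹. -/

import Mathlib

/-- The four states `a, b, a⁻¹, b⁻¹` of the automaton `B`. -/
inductive Qpm
  | a | b | ai | bi
  deriving DecidableEq

open Qpm

/-- The `r`-cycle `σ = (1,2,…,r)` on `{1,…,r}`. -/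
def csigma (r x : ℕ) : ℕ := if x = r then 1 else x + 1

/-- The inverse of the `r`-cycle `σ`. -/
def csigmaInv (r x : ℕ) : ℕ := if x = 1 then r else x - 1

/-- The transposition `τ = (1,2)`. -/
def ctau (x : ℕ) : ℕ := if x = 1 then 2 else if x = 2 then 1 else x

/-- The transition function of the automaton `B`: states are fixed on letters
other than 1,2; on letter 1 it swaps `a ↔ b`; on letter 2 it swaps `a⁻¹ ↔ b⁻¹`. -/
def phiB (x : ℕ) (q : Qpm) : Qpm :=
  if x = 1 then
    (match q with
     | a => b
     | b => a
     | q => q)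
  else if x = 2 then
    (match q with
     | ai => bi
     | bi => ai
     | q => q)
  else q

/-- The output function of `B`: `σᵢ` at `a`, `σᵢ⁻¹` at `a⁻¹`, `τ` at `b, b⁻¹`. -/
def psiB (ri : ℕ) (q : Qpm) (x : ℕ) : ℕ :=
  match q with
  | a => csigma ri x
  | ai => csigmaInv ri x
  | _ => ctau x

/-- The dual mapping `D_{i,x}` of the automaton `B` (over `Xᵢ = {1,…,rᵢ}`). -/
def dualB (r : ℕ → ℕ) (i : ℕ) : ℕ → List Qpm → List Qpm
  | _, [] => []
  | x, q :: qs => phiB x q :: dualB r i (psiB (r i) q x) qs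

/-- `D_{i,w}`, the composition of dual mappings of `B` along the word `w`. -/
def dualWB (r : ℕ → ℕ) : ℕ → List ℕ → List Qpm → List Qpm
  | _, [], ξ => ξ
  | i, x :: xs, ξ => dualWB r (i + 1) xs (dualB r i x ξ)

/-- The formal inverse of a state. -/
def qinv : Qpm → Qpm
  | a => ai
  | ai => a
  | b => bi
  | bi => b

/-- The swap `a ↔ b`, `a⁻¹ ↔ b⁻¹` (the tilde operation). -/
def til : Qpm → Qpm
  | a => b
  | b => a
  | ai => bi
  | bi => ai

/-- The pattern symbol of a state: `true` stands for `*`, `false` for `*⁻¹`. -/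
def patt : Qpm → Bool
  | a => true
  | b => true
  | _ => false

/-- A word over `Q±` is freely irreducible if no two consecutive letters are
mutually inverse. -/
def FreelyIrred (ξ : List Qpm) : Prop := List.Chain' (fun p q => q ≠ qinv p) ξ

/-- A word over the changing alphabet `Xᵢ = {1,…,rᵢ}`, starting at index `i`. -/
def ValidB (r : ℕ → ℕ) : ℕ → List ℕ → Prop
  | _, [] => True
  | i, x :: xs => x ∈ Set.Icc 1 (r i) ∧ ValidB r (i + 1) xs

/-! Auxiliary lemmas for the proof. -/

lemma til_til (q : Qpm) : til (til q) = q := by cases q <;> rfl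

lemma patt_til (q : Qpm) : patt (til q) = patt q := by cases q <;> rfl

/-- The alternating-pattern relation. -/
def altP (p q : Qpm) : Prop := patt q = !patt p

lemma psiB_pos {ri x : ℕ} (h2 : 2 ≤ ri) (hx : 1 ≤ x) (q : Qpm) :
    1 ≤ psiB ri q x := by
  cases q <;> simp only [psiB, csigma, csigmaInv, ctau] <;> split_ifs <;> omega

/-- Swap mode: if the carried letter is 1 at a `*`-letter (resp. 2 at a `*⁻¹`
letter), the whole alternating word gets swapped. -/
lemma auxSwap (r : ℕ → ℕ) (hge : ∀ i, 2 ≤ r i) (i : ℕ) :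
    ∀ (ξ : List Qpm) (x : ℕ), List.Chain' altP ξ →
      (∀ q, ξ.head? = some q → x = if patt q then 1 else 2) →
      dualB r i x ξ = ξ.map til := by
  intro ξ
  induction ξ with
  | nil => intro x _ _; rfl
  | cons q qs ih =>
    intro x hch hx
    obtain ⟨hhd, htl⟩ := List.isChain_cons.mp hch
    have hx' : x = if patt q then 1 else 2 := hx q rfl
    have h2 : 2 ≤ r i := hge i
    show phiB x q :: dualB r i (psiB (r i) q x) qs = til q :: qs.map til
    have h1 : phiB x q = til q := by
      cases q <;> simp only [patt] at hx' <;> subst hx' <;> rfl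
    rw [h1, ih (psiB (r i) q x) htl]
    intro q' hq'
    have halt : altP q q' := hhd q' hq'
    unfold altP at halt
    rw [halt]
    cases q <;> simp [patt] at hx' ⊢ <;> subst hx' <;>
      simp only [psiB, csigma, csigmaInv, ctau] <;>
      (try split_ifs) <;> omega

/-- Identity mode: otherwise the alternating word is untouched. -/
lemma auxId (r : ℕ → ℕ) (hge : ∀ i, 2 ≤ r i) (i : ℕ) :
    ∀ (ξ : List Qpm) (x : ℕ), 1 ≤ x → List.Chain' altP ξ →
      (∀ q, ξ.head? = some q → x ≠ if patt q then 1 else 2) →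
      dualB r i x ξ = ξ := by
  intro ξ
  induction ξ with
  | nil => intro x _ _ _; rfl
  | cons q qs ih =>
    intro x hxpos hch hx
    obtain ⟨hhd, htl⟩ := List.isChain_cons.mp hch
    have hx' : x ≠ if patt q then 1 else 2 := hx q rfl
    have h2 : 2 ≤ r i := hge i
    show phiB x q :: dualB r i (psiB (r i) q x) qs = q :: qs
    have h1 : phiB x q = q := by
      cases q <;> simp [patt] at hx' <;>
        simp only [phiB] <;> split_ifs <;> first | rfl | (exfalso; omega)
    rw [h1, ih (psiB (r i) q x) (psiB_pos h2 hxpos q) htl]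
    intro q' hq'
    have halt : altP q q' := hhd q' hq'
    unfold altP at halt
    rw [halt]
    cases q <;> simp [patt] at hx' ⊢ <;>
      simp only [psiB, csigma, csigmaInv, ctau] <;>
      (try split_ifs) <;> omega

/-- The carried input letter after processing a word. -/
def carryB (ri : ℕ) : ℕ → List Qpm → ℕ
  | x, [] => x
  | x, q :: qs => carryB ri (psiB ri q x) qs

lemma carryB_pos {ri : ℕ} (h2 : 2 ≤ ri) :
    ∀ (u : List Qpm) {x : ℕ}, 1 ≤ x → 1 ≤ carryB ri x u := by
  intro u
  induction u with
  | nil => intro x hx; exact hx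
  | cons q qs ih => intro x hx; exact ih (psiB_pos h2 hx q)

lemma dualB_append (r : ℕ → ℕ) (i : ℕ) :
    ∀ (u v : List Qpm) (x : ℕ),
      dualB r i x (u ++ v) = dualB r i x u ++ dualB r i (carryB (r i) x u) v := by
  intro u
  induction u with
  | nil => intro v x; rfl
  | cons q qs ih => intro v x; simp [dualB, carryB, ih]

/-- One-step version of the theorem. -/
lemma stepB (r : ℕ → ℕ) (hge : ∀ i, 2 ≤ r i) (i x : ℕ) (hx : 1 ≤ x)
    (ξI ξII : List Qpm) (hch : List.Chain' altP ξII) :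
    dualB r i x (ξI ++ ξII) = dualB r i x ξI ++ ξII ∨
    dualB r i x (ξI ++ ξII) = dualB r i x ξI ++ ξII.map til := by
  rw [dualB_append]
  have hy : 1 ≤ carryB (r i) x ξI := carryB_pos (hge i) ξI hx
  cases ξII with
  | nil => left; rfl
  | cons q qs =>
    by_cases hc : carryB (r i) x ξI = if patt q then 1 else 2
    · right
      congr 1
      refine auxSwap r hge i _ _ hch ?_
      intro q' hq'
      obtain rfl : q = q' := by simpa using hq'
      exact hc
    · left
      congr 1
      refine auxId r hge i _ _ hy hch ?_
      intro q' hq'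
      obtain rfl : q = q' := by simpa using hq'
      exact hc

lemma chain_til {ξ : List Qpm} (h : List.Chain' altP ξ) :
    List.Chain' altP (ξ.map til) := by
  unfold List.Chain' at *; rw [List.isChain_map]
  refine h.imp ?_
  intro a b hab
  unfold altP at *
  rw [patt_til, patt_til]
  exact hab

/-- Main induction along the word `w`. -/
lemma mainB (r : ℕ → ℕ) (hge : ∀ i, 2 ≤ r i) :
    ∀ (w : List ℕ) (i : ℕ) (ξI ξII : List Qpm), ValidB r i w →
      List.Chain' altP ξII →
      dualWB r i w (ξI ++ ξII) = dualWB r i w ξI ++ ξII ∨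
      dualWB r i w (ξI ++ ξII) = dualWB r i w ξI ++ ξII.map til := by
  intro w
  induction w with
  | nil => intro i ξI ξII _ _; left; rfl
  | cons x xs ih =>
    intro i ξI ξII hv hch
    obtain ⟨hx, hv'⟩ := hv
    have hx1 : 1 ≤ x := hx.1
    have hst := stepB r hge i x hx1 ξI ξII hch
    show dualWB r (i+1) xs (dualB r i x (ξI ++ ξII)) = _ ∨
      dualWB r (i+1) xs (dualB r i x (ξI ++ ξII)) = _
    rcases hst with h | h
    · rw [h]
      exact ih (i+1) (dualB r i x ξI) ξII hv' hch
    · rw [h]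
      rcases ih (i+1) (dualB r i x ξI) (ξII.map til) hv' (chain_til hch) with h2 | h2
      · right; exact h2
      · left
        rw [h2, List.map_map]
        have : til ∘ til = id := funext til_til
        rw [this, List.map_id]
        rfl

lemma head_form (s : Bool) (l rr : ℕ) (hrr : rr ≤ 1) :
    ((List.replicate l [s, !s]).flatten ++ List.replicate rr s).head? = none ∨
    ((List.replicate l [s, !s]).flatten ++ List.replicate rr s).head? = some s := by
  cases l with
  | zero =>
    interval_cases rr
    · left; rfl
    · right; rfl
  | succ l => right; simp [List.replicate_succ]

lemma chain_form (s : Bool) :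
    ∀ (l rr : ℕ), rr ≤ 1 →
      List.Chain' (fun p q : Bool => q = !p)
        ((List.replicate l [s, !s]).flatten ++ List.replicate rr s) := by
  intro l
  induction l with
  | zero =>
    intro rr hrr
    interval_cases rr <;> simp [List.Chain', List.isChain_nil, List.isChain_singleton]
  | succ l ih =>
    intro rr hrr
    have hhd := head_form s l rr hrr
    have hch := ih rr hrr
    simp only [List.replicate_succ, List.flatten_cons, List.cons_append,
      List.nil_append, List.append_assoc]
    rw [List.Chain', List.isChain_cons_cons]
    refine ⟨rfl, ?_⟩
    rw [List.isChain_cons]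
    refine ⟨?_, hch⟩
    intro y hy
    rcases hhd with h | h
    · rw [h] at hy; simp at hy
    · rw [h] at hy
      simp only [Option.mem_def, Option.some.injEq] at hy
      subst hy; simp


/-- if `ξ = ξ_I ξ_II` is freely irreducible (with `ξ_I, ξ_II`
the first and second parts, induced by the pattern decomposition), then
`D_{i,w}(ξ) = D_{i,w}(ξ_I) ξ_II` or `D_{i,w}(ξ) = D_{i,w}(ξ_I) ξ̃_II`. -/
theorem dualWB_on_decomposition
    (r : ℕ → ℕ) (hmono : Monotone r) (hge : ∀ i, 2 ≤ r i)
    (hunb : ∀ N, ∃ i, N < r i)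
    (ξI ξII : List Qpm) (hirr : FreelyIrred (ξI ++ ξII))
    (hlast : ξI ≠ [] → (ξI.map patt).getLast? = (ξII.map patt).head?)
    (hform : ∃ (s : Bool) (l rr : ℕ), rr ≤ 1 ∧ (l, rr) ≠ (0, 0) ∧
      ξII.map patt = (List.replicate l [s, !s]).flatten ++ List.replicate rr s) :
    ∀ (i : ℕ) (w : List ℕ), ValidB r i w →
      dualWB r i w (ξI ++ ξII) = dualWB r i w ξI ++ ξII ∨
      dualWB r i w (ξI ++ ξII) = dualWB r i w ξI ++ ξII.map til := by
  obtain ⟨s, l, rr, hrr, -, hp⟩ := hform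
  have hchb : List.Chain' (fun p q : Bool => q = !p) (ξII.map patt) := by
    rw [hp]; exact chain_form s l rr hrr
  have hch : List.Chain' altP ξII := by
    rw [List.Chain', List.isChain_map] at hchb
    exact hchb
  intro i w hv
  exact mainB r hge w i ξI ξII hv hch
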